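/- arXiv:2503.22523 — 3 statements merged into one kernel-verified Lean document; each statement's English description precedes it below -/
import Mathlib

section
/- Along the SQRT-ISTA iteration, the distance from 0 to the subdifferential of Φ_μ at f_{k+1} is bounded: dist(0, ∂Φ_μ(f_{k+1})) ≤ (1/τ + 2‖A‖²)·‖f_{k+1} - f_k‖/σ_k, provided σ_k, σ_{k+1} > 0. -/
open scoped RealInnerProductSpace BigOperators
open Filter Topology

set_option maxHeartbeats 1000000

noncomputable def softTh (t x : ℝ) : ℝ :=
  if x ≤ -(t/2) then x + t/2 else if |x| < t/2 then 0 else x - t/2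

noncomputable def softThVec {d : ℕ} (t : ℝ) (x : EuclideanSpace ℝ (Fin d)) :
    EuclideanSpace ℝ (Fin d) := WithLp.toLp 2 (fun i => softTh t (x i))

noncomputable def l1 {d : ℕ} (f : EuclideanSpace ℝ (Fin d)) : ℝ := ∑ i, |f i|

lemma softTh_sub_spec (t p : ℝ) (ht : 0 ≤ t) :
    |p - softTh t p| ≤ t/2 ∧ (p - softTh t p) * softTh t p = t/2 * |softTh t p| := by
  unfold softTh
  split_ifs with h1 h2
  · constructor
    · rw [show p - (p + t/2) = -(t/2) by ring, abs_neg, abs_of_nonneg (by linarith)]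
    · rw [abs_of_nonpos (by linarith)]; ring
  · rw [abs_lt] at h2
    constructor
    · rw [sub_zero, abs_le]; constructor <;> linarith
    · simp
  · push_neg at h1 h2
    have hp : t/2 ≤ p := by
      rcases le_abs.mp h2 with h | h
      · exact h
      · linarith
    constructor
    · rw [show p - (p - t/2) = t/2 by ring, abs_of_nonneg (by linarith)]
    · rw [abs_of_nonneg (by linarith)]; ring

lemma softTh_subgrad (t p y : ℝ) (ht : 0 ≤ t) :
    t/2 * |softTh t p| + (p - softTh t p) * (y - softTh t p) ≤ t/2 * |y| := by
  obtain ⟨h1, h2⟩ := softTh_sub_spec t p ht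
  have h3 : (p - softTh t p) * y ≤ t/2 * |y| := by
    calc (p - softTh t p) * y ≤ |(p - softTh t p) * y| := le_abs_self _
    _ = |p - softTh t p| * |y| := abs_mul _ _
    _ ≤ t/2 * |y| := mul_le_mul_of_nonneg_right h1 (abs_nonneg y)
  nlinarith [h2]

lemma l1_subgrad {d : ℕ} (t : ℝ) (ht : 0 ≤ t) (p y : EuclideanSpace ℝ (Fin d)) :
    t/2 * l1 (softThVec t p) + ⟪p - softThVec t p, y - softThVec t p⟫ ≤ t/2 * l1 y := by
  have hinner : ∀ u v : EuclideanSpace ℝ (Fin d), ⟪u, v⟫ = ∑ i, u i * v i := by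
    intro u v; simp [PiLp.inner_apply, RCLike.inner_apply]; exact Finset.sum_congr rfl fun i _ => mul_comm _ _
  rw [hinner]
  unfold l1
  rw [Finset.mul_sum, Finset.mul_sum, ← Finset.sum_add_distrib]
  apply Finset.sum_le_sum
  intro i _
  have := softTh_subgrad t (p i) (y i) ht
  simpa [softThVec] using this

theorem sqrt_ista_subdiff_bound {d m : ℕ} (τ μ : ℝ) (hτ : 0 < τ) (hμ : 0 < μ)
    (A : EuclideanSpace ℝ (Fin d) →L[ℝ] EuclideanSpace ℝ (Fin m))
    (g : EuclideanSpace ℝ (Fin m))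
    (f : ℕ → EuclideanSpace ℝ (Fin d)) (σ : ℕ → ℝ)
    (hσ : ∀ k, σ k = ‖A (f k) - g‖) (hσpos : ∀ k, 0 < σ k)
    (hiter : ∀ k, f (k + 1) =
      softThVec (2 * τ * μ * σ k) (f k + τ • (ContinuousLinearMap.adjoint A) (g - A (f k)))) :
    ∀ k, Metric.infDist 0
        {w : EuclideanSpace ℝ (Fin d) | ∀ y,
          ‖A y - g‖ + μ * l1 y ≥ ‖A (f (k + 1)) - g‖ + μ * l1 (f (k + 1)) + ⟪w, y - f (k + 1)⟫} ≤
      (1 / τ + 2 * ‖A‖ ^ 2) * ‖f (k + 1) - f k‖ / σ k := by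
  intro k
  have hσk := hσpos k
  have hσk1 := hσpos (k+1)
  set x : EuclideanSpace ℝ (Fin d) := f (k+1) with hxdef
  have hσ1 : σ (k+1) = ‖A x - g‖ := by rw [hxdef]; exact hσ (k+1)
  set p : EuclideanSpace ℝ (Fin d) :=
    f k + τ • (ContinuousLinearMap.adjoint A) (g - A (f k)) with hpdef
  have hxp : x = softThVec (2*τ*μ*σ k) p := hiter k
  set w : EuclideanSpace ℝ (Fin d) :=
    (σ (k+1))⁻¹ • (ContinuousLinearMap.adjoint A) (A x - g) + (τ * σ k)⁻¹ • (p - x) with hwdef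
  have hmem : w ∈ {w : EuclideanSpace ℝ (Fin d) | ∀ y,
      ‖A y - g‖ + μ * l1 y ≥ ‖A (f (k + 1)) - g‖ + μ * l1 (f (k + 1)) + ⟪w, y - f (k + 1)⟫} := by
    intro y
    -- part (a): subgradient of the norm term
    have ha : ‖A x - g‖ + ⟪(σ (k+1))⁻¹ • (ContinuousLinearMap.adjoint A) (A x - g), y - x⟫
        ≤ ‖A y - g‖ := by
      rw [real_inner_smul_left, ContinuousLinearMap.adjoint_inner_left, map_sub]
      have h1 : ⟪A x - g, A y - A x⟫ = ⟪A x - g, A y - g⟫ - ⟪A x - g, A x - g⟫ := by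
        rw [← inner_sub_right]; congr 1; abel
      rw [h1, real_inner_self_eq_norm_sq, ← hσ1]
      have h2 : ⟪A x - g, A y - g⟫ ≤ σ (k+1) * ‖A y - g‖ := by
        rw [hσ1]; exact real_inner_le_norm _ _
      have key : (σ (k+1))⁻¹ * (⟪A x - g, A y - g⟫ - σ (k+1)^2) ≤ ‖A y - g‖ - σ (k+1) := by
        rw [inv_mul_le_iff₀ hσk1]
        nlinarith [h2]
      linarith
    -- part (b): subgradient of the l1 term
    have hb : μ * l1 x + ⟪(τ * σ k)⁻¹ • (p - x), y - x⟫ ≤ μ * l1 y := by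
      have ht : (0:ℝ) ≤ 2*τ*μ*σ k := by positivity
      have hsub := l1_subgrad (2*τ*μ*σ k) ht p y
      rw [← hxp, show (2*τ*μ*σ k)/2 = τ*μ*σ k by ring] at hsub
      rw [real_inner_smul_left]
      have hpos : (0:ℝ) < τ * σ k := by positivity
      have hmul := mul_le_mul_of_nonneg_left hsub (le_of_lt (inv_pos.mpr hpos))
      calc μ * l1 x + (τ * σ k)⁻¹ * ⟪p - x, y - x⟫
          = (τ * σ k)⁻¹ * (τ*μ*σ k * l1 x + ⟪p - x, y - x⟫) := by
            field_simp
        _ ≤ (τ * σ k)⁻¹ * (τ*μ*σ k * l1 y) := hmul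
        _ = μ * l1 y := by field_simp
    show ‖A y - g‖ + μ * l1 y ≥ ‖A x - g‖ + μ * l1 x + ⟪w, y - x⟫
    rw [hwdef, inner_add_left]
    linarith [ha, hb]
  have hdist : Metric.infDist 0 {w : EuclideanSpace ℝ (Fin d) | ∀ y,
      ‖A y - g‖ + μ * l1 y ≥ ‖A (f (k + 1)) - g‖ + μ * l1 (f (k + 1)) + ⟪w, y - f (k + 1)⟫}
      ≤ ‖w‖ := by
    have h := Metric.infDist_le_dist_of_mem (x := (0 : EuclideanSpace ℝ (Fin d))) hmem
    simpa [dist_eq_norm] using h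
  refine hdist.trans ?_
  -- norm bound on w
  have hτ' : (τ:ℝ) ≠ 0 := ne_of_gt hτ
  have hσk' : (σ k) ≠ 0 := ne_of_gt hσk
  have hσk1' : (σ (k+1)) ≠ 0 := ne_of_gt hσk1
  set v : EuclideanSpace ℝ (Fin m) :=
    (σ k)⁻¹ • (A x - A (f k)) + ((σ (k+1))⁻¹ - (σ k)⁻¹) • (A x - g) with hv
  have hwsplit : w = (τ * σ k)⁻¹ • (f k - x) + (ContinuousLinearMap.adjoint A) v := by
    rw [hwdef, hv, hpdef]
    simp only [map_add, map_smul, map_sub, smul_sub, smul_add, smul_smul]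
    match_scalars <;> (field_simp; try ring)
  have hnormΔ : ‖f k - x‖ = ‖x - f k‖ := norm_sub_rev _ _
  have hdiff : |σ (k+1) - σ k| ≤ ‖A‖ * ‖x - f k‖ := by
    rw [hσ1, hσ k]
    calc |‖A x - g‖ - ‖A (f k) - g‖| ≤ ‖(A x - g) - (A (f k) - g)‖ := abs_norm_sub_norm_le _ _
      _ = ‖A x - A (f k)‖ := by congr 1; abel
      _ = ‖A (x - f k)‖ := by rw [map_sub]
      _ ≤ ‖A‖ * ‖x - f k‖ := A.le_opNorm _
  have hvbound : ‖v‖ ≤ 2 * ‖A‖ * ‖x - f k‖ / σ k := by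
    rw [hv]
    have h1 : ‖(σ k)⁻¹ • (A x - A (f k))‖ ≤ ‖A‖ * ‖x - f k‖ / σ k := by
      rw [norm_smul, Real.norm_eq_abs, abs_of_pos (inv_pos.mpr hσk), ← map_sub,
        div_eq_inv_mul]
      exact mul_le_mul_of_nonneg_left (A.le_opNorm _) (le_of_lt (inv_pos.mpr hσk))
    have h2 : ‖((σ (k+1))⁻¹ - (σ k)⁻¹) • (A x - g)‖ ≤ ‖A‖ * ‖x - f k‖ / σ k := by
      rw [norm_smul, Real.norm_eq_abs, ← hσ1]
      have habs : |(σ (k+1))⁻¹ - (σ k)⁻¹| * σ (k+1) = |σ (k+1) - σ k| / σ k := by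
        rw [show (σ (k+1))⁻¹ - (σ k)⁻¹ = -((σ (k+1) - σ k) / (σ k * σ (k+1))) by
          rw [inv_sub_inv hσk1' hσk', mul_comm (σ (k+1)) (σ k), ← neg_div, neg_sub],
          abs_neg, abs_div, abs_of_pos (mul_pos hσk hσk1)]
        rw [div_mul_eq_mul_div, mul_div_assoc,
          show σ (k+1) / (σ k * σ (k+1)) = 1 / σ k by field_simp, mul_one_div]
      rw [habs]
      gcongr
    calc ‖(σ k)⁻¹ • (A x - A (f k)) + ((σ (k+1))⁻¹ - (σ k)⁻¹) • (A x - g)‖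
        ≤ ‖(σ k)⁻¹ • (A x - A (f k))‖ + ‖((σ (k+1))⁻¹ - (σ k)⁻¹) • (A x - g)‖ := norm_add_le _ _
      _ ≤ ‖A‖ * ‖x - f k‖ / σ k + ‖A‖ * ‖x - f k‖ / σ k := add_le_add h1 h2
      _ = 2 * ‖A‖ * ‖x - f k‖ / σ k := by ring
  have hnormadj : ‖ContinuousLinearMap.adjoint A‖ = ‖A‖ := LinearIsometryEquiv.norm_map _ A
  calc ‖w‖ = ‖(τ * σ k)⁻¹ • (f k - x) + (ContinuousLinearMap.adjoint A) v‖ := by rw [hwsplit]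
    _ ≤ ‖(τ * σ k)⁻¹ • (f k - x)‖ + ‖(ContinuousLinearMap.adjoint A) v‖ := norm_add_le _ _
    _ ≤ (τ * σ k)⁻¹ * ‖x - f k‖ + ‖A‖ * (2 * ‖A‖ * ‖x - f k‖ / σ k) := by
        apply add_le_add
        · rw [norm_smul, Real.norm_eq_abs, abs_of_pos (inv_pos.mpr (mul_pos hτ hσk)), hnormΔ]
        · calc ‖(ContinuousLinearMap.adjoint A) v‖ ≤ ‖ContinuousLinearMap.adjoint A‖ * ‖v‖ :=
              (ContinuousLinearMap.adjoint A).le_opNorm v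
            _ = ‖A‖ * ‖v‖ := by rw [hnormadj]
            _ ≤ ‖A‖ * (2 * ‖A‖ * ‖x - f k‖ / σ k) :=
              mul_le_mul_of_nonneg_left hvbound (norm_nonneg A)
    _ = (1 / τ + 2 * ‖A‖ ^ 2) * ‖x - f k‖ / σ k := by field_simp
end

section
/- (Convergence rate) Let {f_k} be SQRT-ISTA iterates with 0 < τ ≤ 1/‖A‖² and σ_k ≥ σ_min > 0 for all k, and suppose f_k → f*, a minimizer of Φ_μ. Then for all k ≥ 1, Φ_μ(f_k) - Φ_μ(f*) ≤ ‖f_0 - f*‖²/(2τσ_min·k). -/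
open scoped RealInnerProductSpace BigOperators
open Filter Topology

lemma softTh_key (t x v : ℝ) (ht : 0 ≤ t) :
    (x - softTh t x) * (v - softTh t x) ≤ t/2 * |v| - t/2 * |softTh t x| := by
  unfold softTh
  split_ifs with h1 h2
  · rw [abs_of_nonpos (show x + t/2 ≤ 0 by linarith)]
    nlinarith [neg_abs_le v, le_abs_self v, abs_nonneg v]
  · simp only [abs_zero, sub_zero, mul_zero]
    nlinarith [le_abs_self (x*v), abs_mul x v, abs_nonneg v, h2.le, abs_nonneg x]
  · push_neg at h1 h2
    have hx : t/2 ≤ x := by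
      rcases le_abs.mp h2 with h | h
      · exact h
      · linarith
    rw [abs_of_nonneg (show (0:ℝ) ≤ x - t/2 by linarith)]
    nlinarith [neg_abs_le v, le_abs_self v, abs_nonneg v]

lemma prox_ineq {d : ℕ} (t : ℝ) (ht : 0 ≤ t) (y u : EuclideanSpace ℝ (Fin d)) :
    ⟪y - softThVec t y, u - softThVec t y⟫ ≤ t/2 * l1 u - t/2 * l1 (softThVec t y) := by
  rw [PiLp.inner_apply]
  simp only [RCLike.inner_apply, conj_trivial, PiLp.sub_apply]
  unfold l1
  rw [Finset.mul_sum, Finset.mul_sum, ← Finset.sum_sub_distrib]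
  exact Finset.sum_le_sum fun i _ => (mul_comm _ _).trans_le (softTh_key t (y i) (u i) ht)

lemma key_step {d m : ℕ} (τ μ σk : ℝ) (hτ : 0 ≤ τ) (hμ : 0 ≤ μ)
    (A : EuclideanSpace ℝ (Fin d) →L[ℝ] EuclideanSpace ℝ (Fin m))
    (g : EuclideanSpace ℝ (Fin m)) (q : EuclideanSpace ℝ (Fin d))
    (hσk : σk = ‖A q - g‖) (u : EuclideanSpace ℝ (Fin d)) :
    ‖softThVec (2*τ*μ*σk) (q + τ • (ContinuousLinearMap.adjoint A) (g - A q)) - u‖^2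
      + (1 - τ*‖A‖^2) * ‖softThVec (2*τ*μ*σk) (q + τ • (ContinuousLinearMap.adjoint A) (g - A q)) - q‖^2
    ≤ ‖q - u‖^2 + 2*τ*σk*((‖A u - g‖ + μ * l1 u)
        - (‖A (softThVec (2*τ*μ*σk) (q + τ • (ContinuousLinearMap.adjoint A) (g - A q))) - g‖
          + μ * l1 (softThVec (2*τ*μ*σk) (q + τ • (ContinuousLinearMap.adjoint A) (g - A q))))) := by
  have hσk0 : 0 ≤ σk := hσk ▸ norm_nonneg _
  set y := q + τ • (ContinuousLinearMap.adjoint A) (g - A q) with hy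
  set p := softThVec (2*τ*μ*σk) y with hp
  have ht : 0 ≤ 2*τ*μ*σk := by positivity
  have hprox := prox_ineq (2*τ*μ*σk) ht y u
  rw [← hp] at hprox
  have hdec : ⟪y - p, u - p⟫ = ⟪q - p, u - p⟫ + τ * ⟪g - A q, A u - A p⟫ := by
    have : y - p = (q - p) + τ • (ContinuousLinearMap.adjoint A) (g - A q) := by
      rw [hy]; abel
    rw [this, inner_add_left, real_inner_smul_left,
      ContinuousLinearMap.adjoint_inner_left, map_sub]
  have e1 : 2 * ⟪q - p, u - p⟫ = ‖q-p‖^2 + ‖u-p‖^2 - ‖q-u‖^2 := by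
    have h1 : q - u = (q-p) - (u-p) := by abel
    have h2 : ‖(q-p) - (u-p)‖^2 = ‖q-p‖^2 - 2*⟪q-p, u-p⟫ + ‖u-p‖^2 :=
      norm_sub_sq_real _ _
    rw [h1, h2]; ring
  have e2 : ⟪g - A q, A u - A p⟫ = ⟪A q - g, A p - g⟫ - ⟪A q - g, A u - g⟫ := by
    have h1 : g - A q = -(A q - g) := by abel
    have h2 : A u - A p = (A u - g) - (A p - g) := by abel
    rw [h1, h2, inner_neg_left, inner_sub_right]; ring
  have e3 : 2 * ⟪A q - g, A p - g⟫ = ‖A q - g‖^2 + ‖A p - g‖^2 - ‖A q - A p‖^2 := by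
    have h1 : A q - A p = (A q - g) - (A p - g) := by abel
    have h2 : ‖(A q - g) - (A p - g)‖^2
        = ‖A q - g‖^2 - 2*⟪A q - g, A p - g⟫ + ‖A p - g‖^2 := norm_sub_sq_real _ _
    rw [h1, h2]; ring
  have e4 : ‖A q - A p‖ ≤ ‖A‖ * ‖q - p‖ := by
    rw [← map_sub]; exact A.le_opNorm _
  have e4' : ‖A q - A p‖^2 ≤ ‖A‖^2 * ‖q - p‖^2 := by
    nlinarith [norm_nonneg (A q - A p), norm_nonneg (q - p), norm_nonneg A]
  have e5 : σk * ‖A p - g‖ ≤ (σk^2 + ‖A p - g‖^2)/2 := by nlinarith [sq_nonneg (σk - ‖A p - g‖)]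
  have e6 : ⟪A q - g, A u - g⟫ ≤ σk * ‖A u - g‖ := by
    rw [hσk]; exact real_inner_le_norm _ _
  have e7 : σk * ‖A p - g‖ - ‖A‖^2 * ‖q - p‖^2 / 2 ≤ ⟪A q - g, A p - g⟫ := by
    have h3 := hσk ▸ e3
    linarith [e4', e5]
  have e8 : τ * (σk * ‖A p - g‖ - ‖A‖^2 * ‖q - p‖^2 / 2) ≤ τ * ⟪A q - g, A p - g⟫ :=
    mul_le_mul_of_nonneg_left e7 hτ
  have e9 : τ * ⟪A q - g, A u - g⟫ ≤ τ * (σk * ‖A u - g‖) :=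
    mul_le_mul_of_nonneg_left e6 hτ
  rw [hdec, e2] at hprox
  have hnr : ‖p - u‖ = ‖u - p‖ := norm_sub_rev _ _
  have hnr2 : ‖p - q‖ = ‖q - p‖ := norm_sub_rev _ _
  rw [hnr, hnr2]
  linarith [e1, e8, e9, hprox]

theorem sqrt_ista_rate {d m : ℕ} (τ μ : ℝ) (hμ : 0 < μ)
    (A : EuclideanSpace ℝ (Fin d) →L[ℝ] EuclideanSpace ℝ (Fin m))
    (g : EuclideanSpace ℝ (Fin m)) (hτ : 0 < τ) (hτ2 : τ ≤ 1 / ‖A‖ ^ 2)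
    (f : ℕ → EuclideanSpace ℝ (Fin d)) (σ : ℕ → ℝ)
    (hσ : ∀ k, σ k = ‖A (f k) - g‖) (σmin : ℝ) (hσmin : 0 < σmin) (hσlb : ∀ k, σmin ≤ σ k)
    (hiter : ∀ k, f (k + 1) =
      softThVec (2 * τ * μ * σ k) (f k + τ • (ContinuousLinearMap.adjoint A) (g - A (f k))))
    (fstar : EuclideanSpace ℝ (Fin d))
    (hconv : Tendsto f atTop (𝓝 fstar))
    (hmin : ∀ h, ‖A fstar - g‖ + μ * l1 fstar ≤ ‖A h - g‖ + μ * l1 h) :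
    ∀ k : ℕ, 1 ≤ k →
      (‖A (f k) - g‖ + μ * l1 (f k)) - (‖A fstar - g‖ + μ * l1 fstar) ≤
        ‖f 0 - fstar‖ ^ 2 / (2 * τ * σmin * k) := by
  set Φ : EuclideanSpace ℝ (Fin d) → ℝ := fun h => ‖A h - g‖ + μ * l1 h with hΦ
  have hA1 : τ * ‖A‖^2 ≤ 1 := by
    rcases eq_or_lt_of_le (norm_nonneg A) with h | h
    · rw [← h]; simpa using hτ.le
    · have : 0 < ‖A‖^2 := by positivity
      calc τ * ‖A‖^2 ≤ (1 / ‖A‖^2) * ‖A‖^2 := by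
            exact mul_le_mul_of_nonneg_right hτ2 this.le
        _ = 1 := by field_simp
  have key : ∀ k u, ‖f (k+1) - u‖^2 ≤ ‖f k - u‖^2 + 2*τ*(σ k)*(Φ u - Φ (f (k+1))) := by
    intro k u
    have h := key_step τ μ (σ k) hτ.le hμ.le A g (f k) (hσ k) u
    rw [← hiter k] at h
    have h2 : 0 ≤ (1 - τ*‖A‖^2) * ‖f (k+1) - f k‖^2 := by
      apply mul_nonneg (by linarith) (sq_nonneg _)
    simp only [hΦ]
    linarith
  have mono : ∀ k, Φ (f (k+1)) ≤ Φ (f k) := by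
    intro k
    have h := key k (f k)
    have h0 : 0 ≤ ‖f (k+1) - f k‖^2 := sq_nonneg _
    have h1 : ‖f k - f k‖^2 = 0 := by simp
    have hσpos : 0 < σ k := lt_of_lt_of_le hσmin (hσlb k)
    by_contra h'
    push_neg at h'
    have hneg : 2*τ*σ k * (Φ (f k) - Φ (f (k+1))) < 0 :=
      mul_neg_of_pos_of_neg (by positivity) (by linarith)
    linarith
  have anti : ∀ i j : ℕ, i ≤ j → Φ (f j) ≤ Φ (f i) := by
    intro i j hij
    induction j with
    | zero => simp at hij; simp [hij]
    | succ n ih =>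
      rcases Nat.lt_or_ge i (n+1) with h | h
      · exact le_trans (mono n) (ih (Nat.lt_succ_iff.mp h))
      · have : i = n + 1 := le_antisymm hij h
        simp [this]
  intro k hk
  have hpos : (0:ℝ) < 2 * τ * σmin * k := by
    have : (1:ℝ) ≤ (k:ℝ) := by exact_mod_cast hk
    positivity
  rw [le_div_iff₀ hpos]
  -- telescoping sum
  have tele : ∑ j ∈ Finset.range k, (‖f j - fstar‖^2 - ‖f (j+1) - fstar‖^2)
      = ‖f 0 - fstar‖^2 - ‖f k - fstar‖^2 := by
    exact Finset.sum_range_sub' (fun j => ‖f j - fstar‖^2) k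
  have termbd : ∀ j ∈ Finset.range k,
      2*τ*σmin*(Φ (f k) - Φ fstar) ≤ ‖f j - fstar‖^2 - ‖f (j+1) - fstar‖^2 := by
    intro j hj
    have hjk : j + 1 ≤ k := Finset.mem_range.mp hj
    have hkey := key j fstar
    have hD1 : 0 ≤ Φ (f (j+1)) - Φ fstar := by
      have := hmin (f (j+1)); simp only [hΦ]; linarith
    have hDk : Φ (f k) ≤ Φ (f (j+1)) := anti (j+1) k hjk
    have hσj : σmin ≤ σ j := hσlb j
    have step1 : 2*τ*σmin*(Φ (f k) - Φ fstar) ≤ 2*τ*(σ j)*(Φ (f (j+1)) - Φ fstar) := by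
      have hDk0 : 0 ≤ Φ (f k) - Φ fstar := by
        have := hmin (f k); simp only [hΦ]; linarith
      have : 2*τ*σmin*(Φ (f k) - Φ fstar) ≤ 2*τ*(σ j)*(Φ (f k) - Φ fstar) := by
        apply mul_le_mul_of_nonneg_right _ hDk0
        nlinarith
      refine le_trans this ?_
      apply mul_le_mul_of_nonneg_left (by linarith) (by nlinarith)
    linarith [hkey, step1]
  have sumbd := Finset.sum_le_sum termbd
  rw [tele, Finset.sum_const, Finset.card_range, nsmul_eq_mul] at sumbd
  have hnorm : 0 ≤ ‖f k - fstar‖^2 := sq_nonneg _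
  have : (k:ℝ) * (2*τ*σmin*(Φ (f k) - Φ fstar)) ≤ ‖f 0 - fstar‖^2 := by linarith
  simp only [hΦ] at this
  linarith [this]
end

section
/- Let {f_k} be SQRT-ISTA iterates with 0 < τ ≤ 1/‖A‖² and σ_k > 0 for all k, and let f* be any global minimizer of Φ_μ. Then the distances are nonincreasing: ‖f_{k+1} - f*‖ ≤ ‖f_k - f*‖ for all k (Fejér monotonicity). -/
open scoped RealInnerProductSpace BigOperators
open Filter Topology

lemma softTh_prox (t x w : ℝ) (ht : 0 ≤ t) :
    (x - softTh t x) * (w - softTh t x) ≤ t/2 * (|w| - |softTh t x|) := by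
  unfold softTh
  split_ifs with h1 h2
  · rw [abs_of_nonpos (show x + t/2 ≤ 0 by linarith)]
    nlinarith [neg_abs_le w]
  · simp only [sub_zero, abs_zero]
    nlinarith [le_abs_self (x*w), abs_mul x w, abs_nonneg w, (abs_lt.mp h2).1, (abs_lt.mp h2).2]
  · push_neg at h1 h2
    have hx : t/2 ≤ x := by
      rcases le_or_gt 0 x with h|h
      · rwa [abs_of_nonneg h] at h2
      · rw [abs_of_neg h] at h2; linarith
    rw [abs_of_nonneg (show (0:ℝ) ≤ x - t/2 by linarith)]
    nlinarith [le_abs_self w]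

lemma softThVec_prox {d : ℕ} (t : ℝ) (ht : 0 ≤ t) (v w : EuclideanSpace ℝ (Fin d)) :
    ⟪v - softThVec t v, w - softThVec t v⟫ ≤ t/2 * (l1 w - l1 (softThVec t v)) := by
  simp only [PiLp.inner_apply, RCLike.inner_apply, conj_trivial, l1]
  rw [← Finset.sum_sub_distrib, Finset.mul_sum]
  apply Finset.sum_le_sum
  intro i _
  exact (mul_comm _ _).trans_le (softTh_prox t (v i) (w i) ht)

set_option maxHeartbeats 1000000 in
theorem sqrt_ista_fejer {d m : ℕ} (τ μ : ℝ) (hμ : 0 < μ)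
    (A : EuclideanSpace ℝ (Fin d) →L[ℝ] EuclideanSpace ℝ (Fin m))
    (g : EuclideanSpace ℝ (Fin m)) (hτ : 0 < τ) (hτ2 : τ ≤ 1 / ‖A‖ ^ 2)
    (f : ℕ → EuclideanSpace ℝ (Fin d)) (σ : ℕ → ℝ)
    (hσ : ∀ k, σ k = ‖A (f k) - g‖) (hσpos : ∀ k, 0 < σ k)
    (hiter : ∀ k, f (k + 1) =
      softThVec (2 * τ * μ * σ k) (f k + τ • (ContinuousLinearMap.adjoint A) (g - A (f k))))
    (fstar : EuclideanSpace ℝ (Fin d))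
    (hmin : ∀ h, ‖A fstar - g‖ + μ * l1 fstar ≤ ‖A h - g‖ + μ * l1 h) :
    ∀ k, ‖f (k + 1) - fstar‖ ≤ ‖f k - fstar‖ := by
  intro k
  set a := f k with ha
  set b := f (k + 1) with hbdef
  set s := σ k with hsdef
  have hs : s = ‖A a - g‖ := hσ k
  have hsp : 0 < s := hσpos k
  set u := (ContinuousLinearMap.adjoint A) (g - A a) with hu
  set v := a + τ • u with hv
  have hb : b = softThVec (2 * τ * μ * s) v := hiter k
  have htnn : 0 ≤ 2 * τ * μ * s := by positivity
  -- prox inequality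
  have prox : ⟪v - b, fstar - b⟫ ≤ τ * μ * s * (l1 fstar - l1 b) := by
    have := softThVec_prox (2 * τ * μ * s) htnn v fstar
    rw [← hb] at this
    linarith [this]
  -- inner product expansion
  have hvb : v - b = (a - b) + τ • u := by rw [hv]; abel
  have hinner : ⟪v - b, fstar - b⟫
      = ⟪a - b, fstar - b⟫ + τ * ⟪A a - g, A b - g⟫ - τ * ⟪A a - g, A fstar - g⟫ := by
    rw [hvb, inner_add_left, real_inner_smul_left, hu,
      ContinuousLinearMap.adjoint_inner_left]
    have h1 : A (fstar - b) = (A fstar - g) - (A b - g) := by rw [map_sub]; abel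
    have h2 : g - A a = -(A a - g) := by abel
    rw [h1, h2, inner_neg_left]
    simp only [inner_sub_right]
    ring
  -- norm identity
  have hnorm : ‖a - fstar‖^2 = ‖a - b‖^2 + 2 * ⟪a - b, b - fstar⟫ + ‖b - fstar‖^2 := by
    have : a - fstar = (a - b) + (b - fstar) := by abel
    rw [this, norm_add_sq_real]
  have hflip : ⟪a - b, b - fstar⟫ = -⟪a - b, fstar - b⟫ := by
    have : b - fstar = -(fstar - b) := by abel
    rw [this, inner_neg_right]
  -- Cauchy-Schwarz
  have hC1 : ⟪A a - g, A fstar - g⟫ ≤ s * ‖A fstar - g‖ := by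
    rw [hs]; exact real_inner_le_norm _ _
  -- polarization
  have hC2 : ⟪A a - g, A b - g⟫
      = (s^2 + ‖A b - g‖^2 - ‖A (a - b)‖^2) / 2 := by
    have hdiff : (A a - g) - (A b - g) = A (a - b) := by rw [map_sub]; abel
    have := norm_sub_sq_real (A a - g) (A b - g)
    rw [hdiff] at this
    rw [hs]
    linarith
  have hC3 : ‖A (a - b)‖ ≤ ‖A‖ * ‖a - b‖ := A.le_opNorm _
  have hq2 : ‖A (a - b)‖^2 ≤ ‖A‖^2 * ‖a - b‖^2 := by
    nlinarith [norm_nonneg (A (a - b)), norm_nonneg (a - b), norm_nonneg A]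
  have hτA : τ * ‖A‖^2 ≤ 1 := by
    rcases eq_or_ne ‖A‖ 0 with h | h
    · rw [h]; norm_num
    · have h2 : 0 < ‖A‖^2 := by positivity
      rw [le_div_iff₀ h2] at hτ2
      linarith
  have hτq : τ * ‖A (a - b)‖^2 ≤ ‖a - b‖^2 := by
    calc τ * ‖A (a - b)‖^2 ≤ τ * (‖A‖^2 * ‖a - b‖^2) := mul_le_mul_of_nonneg_left hq2 hτ.le
    _ = (τ * ‖A‖^2) * ‖a - b‖^2 := by ring
    _ ≤ 1 * ‖a - b‖^2 := mul_le_mul_of_nonneg_right hτA (sq_nonneg _)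
    _ = ‖a - b‖^2 := one_mul _
  -- minimizer
  have hM : ‖A fstar - g‖ + μ * l1 fstar ≤ ‖A b - g‖ + μ * l1 b := hmin b
  have hM2 : 2 * τ * s * (μ * l1 fstar - μ * l1 b)
      ≤ 2 * τ * s * (‖A b - g‖ - ‖A fstar - g‖) := by
    have h0 : 0 ≤ 2 * τ * s := by positivity
    apply mul_le_mul_of_nonneg_left _ h0
    linarith
  have hC1' : τ * ⟪A a - g, A fstar - g⟫ ≤ τ * (s * ‖A fstar - g‖) :=
    mul_le_mul_of_nonneg_left hC1 hτ.le
  have hC2' : τ * ⟪A a - g, A b - g⟫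
      = τ * (s^2 + ‖A b - g‖^2 - ‖A (a - b)‖^2) / 2 := by rw [hC2]; ring
  have hsw : 0 ≤ τ * (s - ‖A b - g‖)^2 := mul_nonneg hτ.le (sq_nonneg _)
  -- combine to squared inequality
  have hsq : ‖b - fstar‖^2 ≤ ‖a - fstar‖^2 := by
    nlinarith [prox, hinner, hnorm, hflip, hC2', hτq, hM2, hC1', hsw]
  have h1 := Real.sqrt_le_sqrt hsq
  rwa [Real.sqrt_sq (norm_nonneg _), Real.sqrt_sq (norm_nonneg _)] at h1
end
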